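/- Let A and B be groups and W ⊆ F_∞ a set of words. Then (A ∗_W B)/W(A ∗_W B) is isomorphic to (A/W(A)) ∗_W (B/W(B)); together with the isomorphism W(A) × W(B) ≅ W(A ∗_W B) this yields a short exact sequence 1 → W(A) × W(B) → A ∗_W B → (A/W(A)) ∗_W (B/W(B)) → 1. Moreover, the induced isomorphism restricts to an isomorphism of the subgroup [A,B]^w of A ∗_W B onto the subgroup [A/W(A), B/W(B)]^w of (A/W(A)) ∗_W (B/W(B)). -/

import Mathlib

open Monoid

/-- The verbal subgroup `W(G)`: the subgroup of `G` generated by all evaluations of the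
words of `W` at tuples of elements of `G`. -/
def verbalSubgroup (W : Set (FreeGroup ℕ)) (G : Type*) [Group G] : Subgroup G :=
  Subgroup.closure {x | ∃ w ∈ W, ∃ f : ℕ → G, FreeGroup.lift f w = x}

theorem lift_comp_eval {G H : Type*} [Group G] [Group H] (φ : G →* H) (f : ℕ → G)
    (w : FreeGroup ℕ) : φ (FreeGroup.lift f w) = FreeGroup.lift (φ ∘ f) w := by
  have h : φ.comp (FreeGroup.lift f) = FreeGroup.lift (φ ∘ f) :=
    FreeGroup.ext_hom _ _ (fun a => by simp)
  exact DFunLike.congr_fun h w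

theorem verbalSubgroup_map_le {G H : Type*} [Group G] [Group H] (W : Set (FreeGroup ℕ))
    (φ : G →* H) : (verbalSubgroup W G).map φ ≤ verbalSubgroup W H := by
  rw [verbalSubgroup, MonoidHom.map_closure, Subgroup.closure_le]
  rintro x ⟨y, ⟨w, hw, f, rfl⟩, rfl⟩
  exact Subgroup.subset_closure ⟨w, hw, φ ∘ f, (lift_comp_eval φ f w).symm⟩

/-- Verbal subgroups are normal. -/
instance verbalSubgroup_normal (W : Set (FreeGroup ℕ)) (G : Type*) [Group G] :
    (verbalSubgroup W G).Normal := by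
  constructor
  intro n hn g
  have h := verbalSubgroup_map_le (G := G) (H := G) W (MulAut.conj g).toMonoidHom
  have h2 : (MulAut.conj g).toMonoidHom n ∈ verbalSubgroup W G := h ⟨n, hn, rfl⟩
  simpa using h2

open scoped commutatorElement in
/-- The subgroup `[A,B]` of the free product `A ∗ B` generated by the commutators
`[a,b] = a * b * a⁻¹ * b⁻¹` with `a ∈ A`, `b ∈ B`. -/
def commSubgroup (A B : Type*) [Group A] [Group B] : Subgroup (Coprod A B) :=
  Subgroup.closure {x | ∃ (a : A) (b : B), x = ⁅(Coprod.inl a : Coprod A B), Coprod.inr b⁆}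

/-- The kernel of the verbal product: (the normal closure of) `W(A ∗ B) ∩ [A,B]`.
Since `W(A ∗ B) ∩ [A,B]` is in fact a normal subgroup of `A ∗ B`, taking the normal
closure does not change the subgroup. -/
def verbalProductKer (W : Set (FreeGroup ℕ)) (A B : Type*) [Group A] [Group B] :
    Subgroup (Coprod A B) :=
  Subgroup.normalClosure ((verbalSubgroup W (Coprod A B) ⊓ commSubgroup A B : Subgroup _) : Set _)

instance verbalProductKer_normal (W : Set (FreeGroup ℕ)) (A B : Type*) [Group A] [Group B] :
    (verbalProductKer W A B).Normal := Subgroup.normalClosure_normal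

/-- The verbal product `A ∗_W B := (A ∗ B)/(W(A ∗ B) ∩ [A,B])`. -/
abbrev VerbalProduct (W : Set (FreeGroup ℕ)) (A B : Type*) [Group A] [Group B] : Type _ :=
  Coprod A B ⧸ verbalProductKer W A B

/-- The quotient homomorphism `q : A ∗ B → A ∗_W B`. -/
def vq (W : Set (FreeGroup ℕ)) (A B : Type*) [Group A] [Group B] :
    Coprod A B →* VerbalProduct W A B :=
  QuotientGroup.mk' (verbalProductKer W A B)

/-- The copy of `A` inside the verbal product `A ∗_W B`. -/
def vinl (W : Set (FreeGroup ℕ)) (A B : Type*) [Group A] [Group B] :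
    A →* VerbalProduct W A B := (vq W A B).comp Coprod.inl

/-- The copy of `B` inside the verbal product `A ∗_W B`. -/
def vinr (W : Set (FreeGroup ℕ)) (A B : Type*) [Group A] [Group B] :
    B →* VerbalProduct W A B := (vq W A B).comp Coprod.inr

/-- `[A,B]^w`, the image of `[A,B]` in the verbal product `A ∗_W B`. -/
def commW (W : Set (FreeGroup ℕ)) (A B : Type*) [Group A] [Group B] :
    Subgroup (VerbalProduct W A B) := (commSubgroup A B).map (vq W A B)



/-! ### Auxiliary development -/

open scoped commutatorElement

theorem verbalSubgroup_map_of_surjective {G H : Type*} [Group G] [Group H]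
    (W : Set (FreeGroup ℕ)) (φ : G →* H) (hφ : Function.Surjective φ) :
    (verbalSubgroup W G).map φ = verbalSubgroup W H := by
  refine le_antisymm (verbalSubgroup_map_le W φ) ?_
  rw [verbalSubgroup, Subgroup.closure_le]
  rintro x ⟨w, hw, f, rfl⟩
  refine ⟨FreeGroup.lift (fun n => Function.surjInv hφ (f n)) w,
    Subgroup.subset_closure ⟨w, hw, _, rfl⟩, ?_⟩
  rw [lift_comp_eval]
  have : (⇑φ ∘ fun n => Function.surjInv hφ (f n)) = f := funext fun n => Function.surjInv_eq hφ (f n)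
  rw [this]

theorem verbalSubgroup_le_ker (W : Set (FreeGroup ℕ)) (G : Type*) [Group G] :
    ∀ a ∈ verbalSubgroup W G, (QuotientGroup.mk' (verbalSubgroup W G)) a = 1 := fun a ha => by
  simpa [QuotientGroup.eq_one_iff] using ha

theorem comm_mem {A B : Type*} [Group A] [Group B] (a : A) (b : B) :
    ⁅(Coprod.inl a : Coprod A B), Coprod.inr b⁆ ∈ commSubgroup A B :=
  Subgroup.subset_closure ⟨a, b, rfl⟩

theorem conj_inl_mem {A B : Type*} [Group A] [Group B] (a : A) {x : Coprod A B}
    (hx : x ∈ commSubgroup A B) :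
    Coprod.inl a * x * (Coprod.inl a)⁻¹ ∈ commSubgroup A B := by
  induction hx using Subgroup.closure_induction with
  | mem y hy =>
    obtain ⟨c, d, rfl⟩ := hy
    have : Coprod.inl a * ⁅(Coprod.inl c : Coprod A B), Coprod.inr d⁆ * (Coprod.inl a)⁻¹
        = ⁅(Coprod.inl (a * c) : Coprod A B), Coprod.inr d⁆ *
          ⁅(Coprod.inl a : Coprod A B), Coprod.inr d⁆⁻¹ := by
      simp only [map_mul]; group
    rw [this]
    exact mul_mem (comm_mem _ _) (inv_mem (comm_mem _ _))
  | one => simpa using one_mem _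
  | mul y z _ _ hy hz =>
    have : Coprod.inl a * (y * z) * (Coprod.inl a)⁻¹
        = (Coprod.inl a * y * (Coprod.inl a)⁻¹) * (Coprod.inl a * z * (Coprod.inl a)⁻¹) := by
      group
    rw [this]; exact mul_mem hy hz
  | inv y _ hy =>
    have : Coprod.inl a * y⁻¹ * (Coprod.inl a)⁻¹
        = (Coprod.inl a * y * (Coprod.inl a)⁻¹)⁻¹ := by group
    rw [this]; exact inv_mem hy

theorem conj_inr_mem {A B : Type*} [Group A] [Group B] (b : B) {x : Coprod A B}
    (hx : x ∈ commSubgroup A B) :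
    Coprod.inr b * x * (Coprod.inr b)⁻¹ ∈ commSubgroup A B := by
  induction hx using Subgroup.closure_induction with
  | mem y hy =>
    obtain ⟨c, d, rfl⟩ := hy
    have : Coprod.inr b * ⁅(Coprod.inl c : Coprod A B), Coprod.inr d⁆ * (Coprod.inr b)⁻¹
        = ⁅(Coprod.inl c : Coprod A B), Coprod.inr b⁆⁻¹ *
          ⁅(Coprod.inl c : Coprod A B), (Coprod.inr (b * d) : Coprod A B)⁆ := by
      simp only [map_mul]; group
    rw [this]
    exact mul_mem (inv_mem (comm_mem _ _)) (comm_mem _ _)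
  | one => simpa using one_mem _
  | mul y z _ _ hy hz =>
    have : Coprod.inr b * (y * z) * (Coprod.inr b)⁻¹
        = (Coprod.inr b * y * (Coprod.inr b)⁻¹) * (Coprod.inr b * z * (Coprod.inr b)⁻¹) := by
      group
    rw [this]; exact mul_mem hy hz
  | inv y _ hy =>
    have : Coprod.inr b * y⁻¹ * (Coprod.inr b)⁻¹
        = (Coprod.inr b * y * (Coprod.inr b)⁻¹)⁻¹ := by group
    rw [this]; exact inv_mem hy

instance commSubgroup_normal (A B : Type*) [Group A] [Group B] : (commSubgroup A B).Normal := by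
  have htop : ∀ g : Coprod A B, g ∈ Subgroup.normalizer (commSubgroup A B : Set (Coprod A B)) := by
    intro g
    induction g using Coprod.induction_on with
    | inl a =>
      rw [Subgroup.mem_normalizer_iff]
      intro h
      constructor
      · exact fun hh => conj_inl_mem a hh
      · intro hh
        have := conj_inl_mem a⁻¹ hh
        simpa [mul_assoc] using this
    | inr b =>
      rw [Subgroup.mem_normalizer_iff]
      intro h
      constructor
      · exact fun hh => conj_inr_mem b hh
      · intro hh
        have := conj_inr_mem b⁻¹ hh
        simpa [mul_assoc] using this
    | mul x y hx hy => exact mul_mem hx hy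
  have : Subgroup.normalizer (commSubgroup A B : Set (Coprod A B)) = ⊤ := by
    rw [eq_top_iff]; exact fun g _ => htop g
  exact Subgroup.normalizer_eq_top_iff.mp this

section KerPsi
open Monoid
variable (A B : Type*) [Group A] [Group B]

/-- The natural projection `A ∗ B → A × B`. -/
def psiProj : Coprod A B →* A × B := Coprod.lift (MonoidHom.inl A B) (MonoidHom.inr A B)

variable {A B}

theorem psiProj_inl (a : A) : psiProj A B (Coprod.inl a) = (a, 1) := by
  simp [psiProj]

theorem psiProj_inr (b : B) : psiProj A B (Coprod.inr b) = (1, b) := by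
  simp [psiProj]

/-- The retraction `A × B → (A ∗ B)/[A,B]`. -/
def rhoComm : A × B →* Coprod A B ⧸ commSubgroup A B where
  toFun p := QuotientGroup.mk (Coprod.inl p.1) * QuotientGroup.mk (Coprod.inr p.2)
  map_one' := by simp
  map_mul' p q := by
    obtain ⟨a1, b1⟩ := p; obtain ⟨a2, b2⟩ := q
    simp only [Prod.mk_mul_mk, map_mul]
    have hcomm : (QuotientGroup.mk (Coprod.inr b1) : Coprod A B ⧸ commSubgroup A B) *
        QuotientGroup.mk (Coprod.inl a2) =
        QuotientGroup.mk (Coprod.inl a2) * QuotientGroup.mk (Coprod.inr b1) := by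
      rw [← QuotientGroup.mk_mul, ← QuotientGroup.mk_mul, QuotientGroup.eq]
      have : (Coprod.inr b1 * Coprod.inl a2 : Coprod A B)⁻¹ *
          (Coprod.inl a2 * Coprod.inr b1) =
          ⁅(Coprod.inl a2⁻¹ : Coprod A B), Coprod.inr b1⁻¹⁆ := by
        simp only [map_inv]; group
      rw [this]
      exact comm_mem _ _
    set x1 : Coprod A B ⧸ commSubgroup A B := QuotientGroup.mk (Coprod.inl a1)
    set x2 : Coprod A B ⧸ commSubgroup A B := QuotientGroup.mk (Coprod.inl a2)
    set y1 : Coprod A B ⧸ commSubgroup A B := QuotientGroup.mk (Coprod.inr b1)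
    set y2 : Coprod A B ⧸ commSubgroup A B := QuotientGroup.mk (Coprod.inr b2)
    calc x1 * x2 * (y1 * y2) = x1 * (x2 * y1) * y2 := by group
      _ = x1 * (y1 * x2) * y2 := by rw [← hcomm]
      _ = x1 * y1 * (x2 * y2) := by group

theorem ker_psiProj : (psiProj A B).ker = commSubgroup A B := by
  refine le_antisymm ?_ ?_
  · have hcomp : (rhoComm (A := A) (B := B)).comp (psiProj A B) =
        QuotientGroup.mk' (commSubgroup A B) := by
      refine Coprod.hom_ext ?_ ?_ <;> ext x <;>
        simp [psiProj, rhoComm, QuotientGroup.mk'_apply]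
    intro x hx
    have h1 : rhoComm (psiProj A B x) = QuotientGroup.mk x :=
      DFunLike.congr_fun hcomp x
    rw [MonoidHom.mem_ker] at hx
    rw [hx, map_one] at h1
    exact (QuotientGroup.eq_one_iff x).mp h1.symm
  · rw [commSubgroup, Subgroup.closure_le]
    rintro x ⟨a, b, rfl⟩
    simp only [SetLike.mem_coe, MonoidHom.mem_ker, map_commutatorElement]
    rw [psiProj_inl, psiProj_inr, commutatorElement_def]
    ext <;> simp
end KerPsi

section Main
open Monoid
variable (W : Set (FreeGroup ℕ)) (A B : Type*) [Group A] [Group B]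

def verbalProductKer' : Subgroup (Coprod A B) :=
  verbalSubgroup W (Coprod A B) ⊓ commSubgroup A B

instance verbalProductKer'_normal : (verbalProductKer' W A B).Normal :=
  ⟨fun n hn g => ⟨(verbalSubgroup_normal W (Coprod A B)).conj_mem n hn.1 g,
    (commSubgroup_normal A B).conj_mem n hn.2 g⟩⟩

variable {W A B}

theorem inl_verbal_mem {a : A} (ha : a ∈ verbalSubgroup W A) :
    (Coprod.inl a : Coprod A B) ∈ verbalSubgroup W (Coprod A B) :=
  verbalSubgroup_map_le W Coprod.inl ⟨a, ha, rfl⟩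

theorem inr_verbal_mem {b : B} (hb : b ∈ verbalSubgroup W B) :
    (Coprod.inr b : Coprod A B) ∈ verbalSubgroup W (Coprod A B) :=
  verbalSubgroup_map_le W Coprod.inr ⟨b, hb, rfl⟩

/-- The key commutator membership: for `a ∈ W(A)`, `⁅inl a, inr b⁆ ∈ W(A∗B) ⊓ [A,B]`. -/
theorem comm_mem_ker' {a : A} (ha : a ∈ verbalSubgroup W A) (b : B) :
    ⁅(Coprod.inl a : Coprod A B), Coprod.inr b⁆ ∈ verbalProductKer' W A B := by
  constructor
  · have h1 : (Coprod.inl a : Coprod A B) ∈ verbalSubgroup W (Coprod A B) :=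
      inl_verbal_mem ha
    have h2 : (Coprod.inr b : Coprod A B) * (Coprod.inl a)⁻¹ * (Coprod.inr b)⁻¹ ∈
        verbalSubgroup W (Coprod A B) :=
      (verbalSubgroup_normal W (Coprod A B)).conj_mem _ (inv_mem h1) _
    have : ⁅(Coprod.inl a : Coprod A B), Coprod.inr b⁆ =
        Coprod.inl a * (Coprod.inr b * (Coprod.inl a)⁻¹ * (Coprod.inr b)⁻¹) := by group
    rw [this]
    exact mul_mem h1 h2
  · exact comm_mem a b

/-- Decomposition of elements of `W(A∗B)` as `inl a * inr b * k`. -/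
theorem verbal_decomp {x : Coprod A B} (hx : x ∈ verbalSubgroup W (Coprod A B)) :
    ∃ a ∈ verbalSubgroup W A, ∃ b ∈ verbalSubgroup W B, ∃ k ∈ verbalProductKer' W A B,
      x = Coprod.inl a * Coprod.inr b * k := by
  set a := (psiProj A B x).1 with hadef
  set b := (psiProj A B x).2 with hbdef
  have ha : a ∈ verbalSubgroup W A :=
    verbalSubgroup_map_le W ((MonoidHom.fst A B).comp (psiProj A B)) ⟨x, hx, rfl⟩
  have hb : b ∈ verbalSubgroup W B :=
    verbalSubgroup_map_le W ((MonoidHom.snd A B).comp (psiProj A B)) ⟨x, hx, rfl⟩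
  refine ⟨a, ha, b, hb, (Coprod.inl a * Coprod.inr b)⁻¹ * x,
    Subgroup.mem_inf.mpr ⟨?_, ?_⟩, by group⟩
  · exact mul_mem (inv_mem (mul_mem (inl_verbal_mem ha) (inr_verbal_mem hb))) hx
  · have hk2 : psiProj A B ((Coprod.inl a * Coprod.inr b)⁻¹ * x) = 1 := by
      rw [map_mul, map_inv, map_mul, psiProj_inl, psiProj_inr]
      ext <;> simp [← hadef, ← hbdef]
    have hmem : (Coprod.inl a * Coprod.inr b)⁻¹ * x ∈ (psiProj A B).ker :=
      MonoidHom.mem_ker.mpr hk2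
    rwa [ker_psiProj] at hmem

variable (W A B)

/-- The canonical map `A ∗ B → (A/W(A)) ∗ (B/W(B))`. -/
def phiMap : Coprod A B →* Coprod (A ⧸ verbalSubgroup W A) (B ⧸ verbalSubgroup W B) :=
  Coprod.lift (Coprod.inl.comp (QuotientGroup.mk' (verbalSubgroup W A)))
    (Coprod.inr.comp (QuotientGroup.mk' (verbalSubgroup W B)))

variable {W A B}

theorem phiMap_inl (a : A) : phiMap W A B (Coprod.inl a) = Coprod.inl (QuotientGroup.mk a) := by
  simp [phiMap]

theorem phiMap_inr (b : B) : phiMap W A B (Coprod.inr b) = Coprod.inr (QuotientGroup.mk b) := by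
  simp [phiMap]

theorem phiMap_surjective : Function.Surjective (phiMap W A B) := by
  intro x
  induction x using Coprod.induction_on with
  | inl a =>
    obtain ⟨a', rfl⟩ := QuotientGroup.mk_surjective a
    exact ⟨Coprod.inl a', phiMap_inl a'⟩
  | inr b =>
    obtain ⟨b', rfl⟩ := QuotientGroup.mk_surjective b
    exact ⟨Coprod.inr b', phiMap_inr b'⟩
  | mul x y hx hy =>
    obtain ⟨x', rfl⟩ := hx; obtain ⟨y', rfl⟩ := hy
    exact ⟨x' * y', map_mul _ _ _⟩

/-- The kernel of `phiMap` is contained in the verbal subgroup. -/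
theorem ker_phiMap_le : (phiMap W A B).ker ≤ verbalSubgroup W (Coprod A B) := by
  set Q := Coprod A B ⧸ verbalSubgroup W (Coprod A B)
  have hA : verbalSubgroup W A ≤
      ((QuotientGroup.mk' (verbalSubgroup W (Coprod A B))).comp Coprod.inl).ker := by
    intro a ha
    simp only [MonoidHom.mem_ker, MonoidHom.comp_apply, QuotientGroup.mk'_apply]
    exact (QuotientGroup.eq_one_iff _).mpr (inl_verbal_mem ha)
  have hB : verbalSubgroup W B ≤
      ((QuotientGroup.mk' (verbalSubgroup W (Coprod A B))).comp Coprod.inr).ker := by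
    intro b hb
    simp only [MonoidHom.mem_ker, MonoidHom.comp_apply, QuotientGroup.mk'_apply]
    exact (QuotientGroup.eq_one_iff _).mpr (inr_verbal_mem hb)
  set ρ : Coprod (A ⧸ verbalSubgroup W A) (B ⧸ verbalSubgroup W B) →* Q :=
    Coprod.lift (QuotientGroup.lift _ _ hA) (QuotientGroup.lift _ _ hB)
  have hcomp : ρ.comp (phiMap W A B) = QuotientGroup.mk' (verbalSubgroup W (Coprod A B)) := by
    refine Coprod.hom_ext ?_ ?_ <;> ext x <;>
      simp only [ρ, phiMap, MonoidHom.comp_apply, Coprod.lift_apply_inl, Coprod.lift_apply_inr,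
        QuotientGroup.mk'_apply, QuotientGroup.lift_mk'] <;> rfl
  intro x hx
  have h1 : ρ (phiMap W A B x) = QuotientGroup.mk x := DFunLike.congr_fun hcomp x
  rw [MonoidHom.mem_ker] at hx
  rw [hx, map_one] at h1
  exact (QuotientGroup.eq_one_iff x).mp h1.symm

/-- `phiMap` maps the verbal subgroup onto the verbal subgroup. -/
theorem phiMap_verbal : (verbalSubgroup W (Coprod A B)).map (phiMap W A B) =
    verbalSubgroup W (Coprod (A ⧸ verbalSubgroup W A) (B ⧸ verbalSubgroup W B)) :=
  verbalSubgroup_map_of_surjective W _ phiMap_surjective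

theorem phiMap_comap_verbal {x : Coprod A B}
    (hx : phiMap W A B x ∈
      verbalSubgroup W (Coprod (A ⧸ verbalSubgroup W A) (B ⧸ verbalSubgroup W B))) :
    x ∈ verbalSubgroup W (Coprod A B) := by
  rw [← phiMap_verbal (W := W) (A := A) (B := B)] at hx
  obtain ⟨y, hy, hyx⟩ := hx
  have : x * y⁻¹ ∈ (phiMap W A B).ker := by
    rw [MonoidHom.mem_ker, map_mul, map_inv, hyx]
    group
  have hxy : x * y⁻¹ ∈ verbalSubgroup W (Coprod A B) :=
    ker_phiMap_le (W := W) (A := A) (B := B) this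
  have := mul_mem hxy hy
  simpa using this

/-- `phiMap` maps `[A,B]` onto `[Ā,B̄]`. -/
theorem phiMap_comm : (commSubgroup A B).map (phiMap W A B) =
    commSubgroup (A ⧸ verbalSubgroup W A) (B ⧸ verbalSubgroup W B) := by
  rw [commSubgroup, MonoidHom.map_closure, commSubgroup]
  congr 1
  ext x
  constructor
  · rintro ⟨y, ⟨a, b, rfl⟩, rfl⟩
    exact ⟨(QuotientGroup.mk a : A ⧸ verbalSubgroup W A), QuotientGroup.mk b, by
      rw [map_commutatorElement, phiMap_inl, phiMap_inr]⟩
  · rintro ⟨a', b', rfl⟩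
    obtain ⟨a, rfl⟩ := QuotientGroup.mk_surjective a'
    obtain ⟨b, rfl⟩ := QuotientGroup.mk_surjective b'
    exact ⟨⁅Coprod.inl a, Coprod.inr b⁆, ⟨a, b, rfl⟩, by
      rw [map_commutatorElement, phiMap_inl, phiMap_inr]⟩

theorem phiMap_ker'_le : (verbalProductKer' W A B).map (phiMap W A B) ≤
    verbalProductKer' W (A ⧸ verbalSubgroup W A) (B ⧸ verbalSubgroup W B) := by
  rintro x ⟨y, ⟨hy1, hy2⟩, rfl⟩
  constructor
  · rw [← phiMap_verbal (W := W) (A := A) (B := B)]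
    exact ⟨y, hy1, rfl⟩
  · rw [← phiMap_comm (W := W) (A := A) (B := B)]
    exact ⟨y, hy2, rfl⟩

/-- `phiMap` maps `W(A∗B)` into the kernel `W ⊓ [A,B]` of the downstairs quotient. -/
theorem phiMap_verbal_le_ker' {x : Coprod A B} (hx : x ∈ verbalSubgroup W (Coprod A B)) :
    phiMap W A B x ∈ verbalProductKer' W (A ⧸ verbalSubgroup W A) (B ⧸ verbalSubgroup W B) := by
  obtain ⟨a, ha, b, hb, k, hk, rfl⟩ := verbal_decomp hx
  have h1 : phiMap W A B (Coprod.inl a) = 1 := by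
    rw [phiMap_inl, (QuotientGroup.eq_one_iff a).mpr ha, map_one]
  have h2 : phiMap W A B (Coprod.inr b) = 1 := by
    rw [phiMap_inr, (QuotientGroup.eq_one_iff b).mpr hb, map_one]
  rw [map_mul, map_mul, h1, h2, one_mul, one_mul]
  exact phiMap_ker'_le ⟨k, hk, rfl⟩
end Main

section Assemble
open Monoid
variable (W : Set (FreeGroup ℕ)) (A B : Type*) [Group A] [Group B]

theorem verbalProductKer_eq_ker' : verbalProductKer W A B = verbalProductKer' W A B := by
  rw [verbalProductKer]
  exact Subgroup.normalClosure_eq_self (verbalProductKer' W A B)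

/-- The induced map `A ∗_W B → (A/W(A)) ∗_W (B/W(B))`. -/
def pMap : VerbalProduct W A B →*
    VerbalProduct W (A ⧸ verbalSubgroup W A) (B ⧸ verbalSubgroup W B) :=
  QuotientGroup.lift (verbalProductKer W A B)
    ((vq W (A ⧸ verbalSubgroup W A) (B ⧸ verbalSubgroup W B)).comp (phiMap W A B))
    (by
      intro x hx
      rw [verbalProductKer_eq_ker'] at hx
      have h : phiMap W A B x ∈
          verbalProductKer' W (A ⧸ verbalSubgroup W A) (B ⧸ verbalSubgroup W B) :=
        phiMap_ker'_le ⟨x, hx, rfl⟩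
      simp only [MonoidHom.mem_ker, MonoidHom.comp_apply, vq, QuotientGroup.mk'_apply]
      rw [QuotientGroup.eq_one_iff, verbalProductKer_eq_ker']
      exact h)

variable {W A B}

theorem pMap_mk (x : Coprod A B) :
    pMap W A B (vq W A B x) =
      vq W (A ⧸ verbalSubgroup W A) (B ⧸ verbalSubgroup W B) (phiMap W A B x) :=
  QuotientGroup.lift_mk' _ _ x

theorem vq_surjective : Function.Surjective (vq W A B) :=
  QuotientGroup.mk'_surjective _

theorem vq_eq_iff {u v : Coprod A B} :
    vq W A B u = vq W A B v ↔ u⁻¹ * v ∈ verbalProductKer W A B := by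
  simp only [vq, QuotientGroup.mk'_apply]
  exact QuotientGroup.eq

theorem verbal_vq : verbalSubgroup W (VerbalProduct W A B) =
    (verbalSubgroup W (Coprod A B)).map (vq W A B) :=
  (verbalSubgroup_map_of_surjective W _ vq_surjective).symm

theorem vq_psi_eq {u v : Coprod A B} (h : vq W A B u = vq W A B v) :
    psiProj A B u = psiProj A B v := by
  have h1 : u⁻¹ * v ∈ verbalProductKer W A B := vq_eq_iff.mp h
  rw [verbalProductKer_eq_ker'] at h1
  have h2 : u⁻¹ * v ∈ (psiProj A B).ker := by rw [ker_psiProj]; exact h1.2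
  rw [MonoidHom.mem_ker, map_mul, map_inv] at h2
  exact inv_mul_eq_one.mp h2

theorem vinr_comm_vinl {a : A} (ha : a ∈ verbalSubgroup W A) (b : B) :
    vinr W A B b * vinl W A B a = vinl W A B a * vinr W A B b := by
  simp only [vinl, vinr, MonoidHom.comp_apply, ← map_mul]
  rw [vq_eq_iff, verbalProductKer_eq_ker']
  have : (Coprod.inr b * Coprod.inl a : Coprod A B)⁻¹ * (Coprod.inl a * Coprod.inr b) =
      ⁅(Coprod.inl a⁻¹ : Coprod A B), Coprod.inr b⁻¹⁆ := by
    simp only [map_inv]; group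
  rw [this]
  exact comm_mem_ker' (inv_mem ha) b⁻¹

variable (W A B)

/-- The embedding `W(A) × W(B) → A ∗_W B`. -/
def iotaMap : (verbalSubgroup W A × verbalSubgroup W B) →* VerbalProduct W A B where
  toFun x := vinl W A B x.1 * vinr W A B x.2
  map_one' := by simp
  map_mul' x y := by
    simp only [Prod.fst_mul, Prod.snd_mul, Subgroup.coe_mul, map_mul]
    set x1 := vinl W A B x.1
    set x2 := vinl W A B y.1
    set y1 := vinr W A B x.2
    set y2 := vinr W A B y.2
    have hc : y1 * x2 = x2 * y1 := vinr_comm_vinl (A := A) (B := B) y.1.2 ↑x.2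
    calc x1 * x2 * (y1 * y2) = x1 * (x2 * y1) * y2 := by group
      _ = x1 * (y1 * x2) * y2 := by rw [← hc]
      _ = x1 * y1 * (x2 * y2) := by group

variable {W A B}

theorem vq_eq_one_of_ker' {k : Coprod A B} (hk : k ∈ verbalProductKer' W A B) :
    vq W A B k = 1 := by
  simp only [vq, QuotientGroup.mk'_apply]
  rw [QuotientGroup.eq_one_iff, verbalProductKer_eq_ker']
  exact hk

end Assemble

/-- `(A ∗_W B)/W(A ∗_W B) ≅ (A/W(A)) ∗_W (B/W(B))`, giving the short exact sequence
`1 → W(A) × W(B) → A ∗_W B → (A/W(A)) ∗_W (B/W(B)) → 1`; moreover the natural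
surjection restricts to an isomorphism of `[A,B]^w` onto `[A/W(A), B/W(B)]^w`. -/
theorem verbalProduct_short_exact_sequence {A B : Type*} [Group A] [Group B]
    (W : Set (FreeGroup ℕ)) :
    ∃ p : VerbalProduct W A B →*
        VerbalProduct W (A ⧸ verbalSubgroup W A) (B ⧸ verbalSubgroup W B),
      (∀ a : A, p (vinl W A B a) =
        vinl W (A ⧸ verbalSubgroup W A) (B ⧸ verbalSubgroup W B) (QuotientGroup.mk a)) ∧
      (∀ b : B, p (vinr W A B b) =
        vinr W (A ⧸ verbalSubgroup W A) (B ⧸ verbalSubgroup W B) (QuotientGroup.mk b)) ∧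
      Function.Surjective p ∧
      p.ker = verbalSubgroup W (VerbalProduct W A B) ∧
      (∃ ι : (verbalSubgroup W A × verbalSubgroup W B) →* VerbalProduct W A B,
        (∀ x : verbalSubgroup W A × verbalSubgroup W B,
          ι x = vinl W A B x.1 * vinr W A B x.2) ∧
        Function.Injective ι ∧
        ι.range = verbalSubgroup W (VerbalProduct W A B)) ∧
      (commW W A B).map p =
        commW W (A ⧸ verbalSubgroup W A) (B ⧸ verbalSubgroup W B) ∧
      Set.InjOn p (commW W A B : Set (VerbalProduct W A B)) ∧
      Nonempty ((VerbalProduct W A B ⧸ verbalSubgroup W (VerbalProduct W A B)) ≃*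
        VerbalProduct W (A ⧸ verbalSubgroup W A) (B ⧸ verbalSubgroup W B)) := by
  have hsurj : Function.Surjective (pMap W A B) := by
    intro y
    obtain ⟨z, rfl⟩ := vq_surjective (W := W) y
    obtain ⟨x, rfl⟩ := phiMap_surjective (W := W) (A := A) (B := B) z
    exact ⟨vq W A B x, pMap_mk x⟩
  have hker : (pMap W A B).ker = verbalSubgroup W (VerbalProduct W A B) := by
    apply le_antisymm
    · intro x hx
      obtain ⟨u, rfl⟩ := vq_surjective (W := W) x
      rw [MonoidHom.mem_ker, pMap_mk] at hx
      rw [vq, QuotientGroup.mk'_apply, QuotientGroup.eq_one_iff,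
        verbalProductKer_eq_ker'] at hx
      have h2 : u ∈ verbalSubgroup W (Coprod A B) := phiMap_comap_verbal hx.1
      rw [verbal_vq]
      exact ⟨u, h2, rfl⟩
    · rw [verbal_vq]
      rintro _ ⟨u, hu, rfl⟩
      rw [MonoidHom.mem_ker, pMap_mk]
      exact vq_eq_one_of_ker' (phiMap_verbal_le_ker' hu)
  refine ⟨pMap W A B, ?_, ?_, hsurj, hker, ?_, ?_, ?_, ?_⟩
  · intro a
    show pMap W A B (vq W A B (Coprod.inl a)) = _
    rw [pMap_mk, phiMap_inl]
    rfl
  · intro b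
    show pMap W A B (vq W A B (Coprod.inr b)) = _
    rw [pMap_mk, phiMap_inr]
    rfl
  · -- the embedding ι
    refine ⟨iotaMap W A B, fun x => rfl, ?_, ?_⟩
    · intro x y h
      have h' : vq W A B (Coprod.inl (x.1 : A) * Coprod.inr (x.2 : B)) =
          vq W A B (Coprod.inl (y.1 : A) * Coprod.inr (y.2 : B)) := by
        simpa only [iotaMap, MonoidHom.coe_mk, OneHom.coe_mk, vinl, vinr,
          MonoidHom.comp_apply, map_mul] using h
      have hpsi := vq_psi_eq h'
      rw [map_mul, map_mul, psiProj_inl, psiProj_inr, psiProj_inl, psiProj_inr] at hpsi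
      have h1 : (↑x.1 : A) = ↑y.1 ∧ (↑x.2 : B) = ↑y.2 := by
        simpa [Prod.ext_iff] using hpsi
      exact Prod.ext (Subtype.ext h1.1) (Subtype.ext h1.2)
    · apply le_antisymm
      · rintro _ ⟨x, rfl⟩
        show vinl W A B ↑x.1 * vinr W A B ↑x.2 ∈ _
        rw [verbal_vq]
        exact mul_mem ⟨Coprod.inl (x.1 : A), inl_verbal_mem x.1.2, rfl⟩
          ⟨Coprod.inr (x.2 : B), inr_verbal_mem x.2.2, rfl⟩
      · rw [verbal_vq]
        rintro _ ⟨u, hu, rfl⟩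
        obtain ⟨a, ha, b, hb, k, hk, rfl⟩ := verbal_decomp hu
        refine ⟨(⟨a, ha⟩, ⟨b, hb⟩), ?_⟩
        show vinl W A B a * vinr W A B b = vq W A B (Coprod.inl a * Coprod.inr b * k)
        rw [map_mul, map_mul, vq_eq_one_of_ker' hk, mul_one]
        rfl
  · -- commW maps onto
    have hcomp : (pMap W A B).comp (vq W A B) =
        (vq W (A ⧸ verbalSubgroup W A) (B ⧸ verbalSubgroup W B)).comp (phiMap W A B) :=
      MonoidHom.ext pMap_mk
    rw [commW, Subgroup.map_map, hcomp, ← Subgroup.map_map,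
      phiMap_comm (W := W) (A := A) (B := B), commW]
  · -- InjOn
    intro x hx y hy h
    rw [SetLike.mem_coe, commW, Subgroup.mem_map] at hx hy
    obtain ⟨u, hu, rfl⟩ := hx
    obtain ⟨v, hv, rfl⟩ := hy
    rw [pMap_mk, pMap_mk] at h
    have h1 := vq_eq_iff.mp h
    rw [verbalProductKer_eq_ker'] at h1
    have h1' : phiMap W A B (u⁻¹ * v) ∈
        verbalProductKer' W (A ⧸ verbalSubgroup W A) (B ⧸ verbalSubgroup W B) := by
      simpa only [map_mul, map_inv] using h1
    have h2 : u⁻¹ * v ∈ verbalSubgroup W (Coprod A B) := phiMap_comap_verbal h1'.1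
    have h3 : u⁻¹ * v ∈ commSubgroup A B := mul_mem (inv_mem hu) hv
    exact vq_eq_iff.mpr (by rw [verbalProductKer_eq_ker']; exact ⟨h2, h3⟩)
  · exact ⟨(QuotientGroup.quotientMulEquivOfEq hker.symm).trans
      (QuotientGroup.quotientKerEquivOfSurjective _ hsurj)⟩
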